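/- Fix K > 0 and α ∈ (1/2, 1). For every λ > 0 and x > 0 both integrals below are finite and ∫₀^∞ e^{−λt} q*(t,x) dt = ( λ^{α−1}/Γ(α) ) ∫₀^∞ e^{−λs} s^{α−1} q_BS(s,x) ds. -/

import Mathlib

open MeasureTheory Set

/-- Standard normal cumulative distribution function. -/
noncomputable def normCdf (z : ℝ) : ℝ :=
  (Real.sqrt (2 * Real.pi))⁻¹ * ∫ u in Set.Iic z, Real.exp (-u ^ 2 / 2)

/-- The Black–Scholes call price function with strike `K`. -/
noncomputable def qBS (K t y : ℝ) : ℝ :=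
  y * normCdf ((2 * Real.log (y / K) + t) / (2 * Real.sqrt t))
    - K * normCdf ((2 * Real.log (y / K) - t) / (2 * Real.sqrt t))

/-- The time-changed Black–Scholes price
`q*(t,y) = (Γ(α)Γ(1−α))⁻¹ ∫₀¹ s^{α−1}(1−s)^{−α} q_BS(ts,y) ds` for `t > 0`,
with `q*(0,y) = (y−K)₊`. -/
noncomputable def qStar (K α t y : ℝ) : ℝ :=
  if t = 0 then max (y - K) 0
  else (Real.Gamma α * Real.Gamma (1 - α))⁻¹ *
    ∫ s in Set.Ioo (0 : ℝ) 1, s ^ (α - 1) * (1 - s) ^ (-α) * qBS K (t * s) y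

lemma integrable_gauss : Integrable (fun u : ℝ => Real.exp (-u ^ 2 / 2)) := by
  have h := integrable_exp_neg_mul_sq (b := 1/2) (by norm_num)
  refine h.congr (Filter.Eventually.of_forall fun u => ?_)
  ring_nf

lemma normCdf_nonneg (z : ℝ) : 0 ≤ normCdf z := by
  refine mul_nonneg (by positivity) ?_
  exact setIntegral_nonneg measurableSet_Iic fun u _ => (Real.exp_pos _).le

lemma normCdf_le_one (z : ℝ) : normCdf z ≤ 1 := by
  have h2 : (0:ℝ) < Real.sqrt (2 * Real.pi) := by
    have := Real.pi_pos; positivity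
  have hint : ∫ u in Set.Iic z, Real.exp (-u ^ 2 / 2) ≤ Real.sqrt (2 * Real.pi) := by
    have hle := setIntegral_le_integral (s := Set.Iic z) integrable_gauss
      (Filter.Eventually.of_forall fun u => (Real.exp_pos _).le)
    have hval : ∫ u : ℝ, Real.exp (-u ^ 2 / 2) = Real.sqrt (2 * Real.pi) := by
      have h := integral_gaussian (1/2)
      have he : (fun u : ℝ => Real.exp (-u ^ 2 / 2)) = fun u => Real.exp (-(1/2) * u ^ 2) := by
        funext u; ring_nf
      rw [he, h]
      norm_num [Real.sqrt_mul_self, mul_comm]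
    linarith [hle, hval.le]
  rw [normCdf]
  rw [inv_mul_le_iff₀ h2, mul_one]
  exact hint

lemma continuous_normCdf : Continuous normCdf := by
  have key : ∀ z : ℝ, normCdf z = (Real.sqrt (2 * Real.pi))⁻¹ *
      ((∫ u in Set.Iic (0:ℝ), Real.exp (-u ^ 2 / 2)) + ∫ u in (0:ℝ)..z, Real.exp (-u ^ 2 / 2)) := by
    intro z
    rw [normCdf]
    congr 1
    have := intervalIntegral.integral_Iic_sub_Iic (f := fun u : ℝ => Real.exp (-u ^ 2 / 2)) (μ := volume)
      (integrable_gauss.integrableOn) (integrable_gauss.integrableOn) (a := 0) (b := z)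
    linarith
  have : normCdf = fun z => (Real.sqrt (2 * Real.pi))⁻¹ *
      ((∫ u in Set.Iic (0:ℝ), Real.exp (-u ^ 2 / 2)) + ∫ u in (0:ℝ)..z, Real.exp (-u ^ 2 / 2)) :=
    funext key
  rw [this]
  exact continuous_const.mul (continuous_const.add
    (integrable_gauss.continuous_primitive 0))


lemma abs_qBS_le {K y : ℝ} (hK : 0 < K) (hy : 0 < y) (t : ℝ) : |qBS K t y| ≤ y + K := by
  rw [qBS]
  have h1 := normCdf_nonneg ((2 * Real.log (y / K) + t) / (2 * Real.sqrt t))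
  have h2 := normCdf_le_one ((2 * Real.log (y / K) + t) / (2 * Real.sqrt t))
  have h3 := normCdf_nonneg ((2 * Real.log (y / K) - t) / (2 * Real.sqrt t))
  have h4 := normCdf_le_one ((2 * Real.log (y / K) - t) / (2 * Real.sqrt t))
  rw [abs_le]
  constructor <;> nlinarith

lemma continuousOn_qBS {K y : ℝ} : ContinuousOn (fun t => qBS K t y) (Set.Ioi 0) := by
  have hs : ∀ t ∈ Set.Ioi (0:ℝ), 2 * Real.sqrt t ≠ 0 := by
    intro t ht
    have : 0 < Real.sqrt t := Real.sqrt_pos.2 ht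
    positivity
  have hsqrt : ContinuousOn (fun t : ℝ => 2 * Real.sqrt t) (Set.Ioi 0) :=
    (continuous_const.mul Real.continuous_sqrt).continuousOn
  apply ContinuousOn.sub
  · exact continuousOn_const.mul (continuous_normCdf.comp_continuousOn
      (((continuousOn_const.add continuousOn_id).div hsqrt hs)))
  · exact continuousOn_const.mul (continuous_normCdf.comp_continuousOn
      (((continuousOn_const.sub continuousOn_id).div hsqrt hs)))

lemma integrableOn_weight {α : ℝ} (hα : α ∈ Set.Ioo (1/2 : ℝ) 1) :
    IntegrableOn (fun s : ℝ => s ^ (α - 1) * (1 - s) ^ (-α)) (Set.Ioo 0 1) := by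
  obtain ⟨hα1, hα2⟩ := hα
  have hcont : ContinuousOn (fun s : ℝ => s ^ (α - 1) * (1 - s) ^ (-α)) (Set.Ioo 0 1) := by
    apply ContinuousOn.mul
    · exact ContinuousOn.rpow_const continuousOn_id fun s hs => Or.inl (ne_of_gt hs.1)
    · exact ContinuousOn.rpow_const (continuousOn_const.sub continuousOn_id)
        fun s hs => Or.inl (by simpa using sub_ne_zero.2 (ne_of_lt hs.2).symm)
  have h2 : Set.Ioo (0:ℝ) 1 ⊆ Set.Ioo 0 (2⁻¹ : ℝ) ∪ Set.Ico (2⁻¹ : ℝ) 1 := by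
    intro s hs
    rcases lt_or_ge s 2⁻¹ with h | h
    · exact Or.inl ⟨hs.1, h⟩
    · exact Or.inr ⟨h, hs.2⟩
  refine IntegrableOn.mono_set (IntegrableOn.union ?_ ?_) h2
  · -- near 0 : bound by 2^α * s^(α-1)
    have hint : IntegrableOn (fun s : ℝ => 2 ^ α * s ^ (α - 1)) (Set.Ioo 0 2⁻¹) := by
      refine Integrable.const_mul ?_ _
      exact (intervalIntegral.integrableOn_Ioo_rpow_iff (by norm_num)).2 (by linarith)
    refine Integrable.mono' hint ((hcont.mono ?_).aestronglyMeasurable measurableSet_Ioo) ?_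
    · intro s hs; exact ⟨hs.1, by linarith [hs.2, (by norm_num : (2:ℝ)⁻¹ < 1)]⟩
    · filter_upwards [ae_restrict_mem measurableSet_Ioo] with s hs
      have hs0 : 0 < s := hs.1
      have hs1 : s < 2⁻¹ := hs.2
      rw [Real.norm_eq_abs, abs_mul, abs_of_nonneg (Real.rpow_nonneg hs0.le _),
        abs_of_nonneg (Real.rpow_nonneg (by linarith) _)]
      have : (1 - s) ^ (-α) ≤ 2 ^ α := by
        have h12 : (2:ℝ)⁻¹ ≤ 1 - s := by linarith
        have := Real.rpow_le_rpow (by norm_num) h12 (by linarith : (0:ℝ) ≤ α)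
        calc (1 - s) ^ (-α) = ((1 - s) ^ α)⁻¹ := by
              rw [← Real.rpow_neg (by linarith)]
            _ ≤ (((2:ℝ)⁻¹) ^ α)⁻¹ := by
              exact inv_anti₀ (Real.rpow_pos_of_pos (by norm_num) _) this
            _ = 2 ^ α := by
              rw [← Real.inv_rpow (by norm_num), inv_inv]
      calc s ^ (α - 1) * (1 - s) ^ (-α) ≤ s ^ (α - 1) * 2 ^ α :=
            mul_le_mul_of_nonneg_left this (Real.rpow_nonneg hs0.le _)
        _ = 2 ^ α * s ^ (α - 1) := mul_comm _ _
  · -- near 1 : bound by 2^(1-α) * (1-s)^(-α)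
    have hbase : IntegrableOn (fun s : ℝ => 2 ^ (1-α) * (1 - s) ^ (-α)) (Set.Ico (2⁻¹:ℝ) 1) := by
      refine Integrable.const_mul ?_ _
      have h1 : IntervalIntegrable (fun u : ℝ => u ^ (-α)) volume 0 (2⁻¹:ℝ) :=
        intervalIntegral.intervalIntegrable_rpow' (by linarith)
      have h2 := (h1.comp_sub_left 1).symm
      have h3 : (1:ℝ) - 2⁻¹ = 2⁻¹ := by norm_num
      rw [sub_zero, h3] at h2
      rw [intervalIntegrable_iff_integrableOn_Ioo_of_le (by norm_num)] at h2
      have : Set.Ico (2⁻¹:ℝ) 1 ⊆ Set.Ioo (2⁻¹:ℝ) 1 ∪ {(2⁻¹:ℝ)} := by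
        intro s hs
        rcases eq_or_lt_of_le hs.1 with h | h
        · exact Or.inr (by simp [h.symm])
        · exact Or.inl ⟨h, hs.2⟩
      refine IntegrableOn.mono_set (IntegrableOn.union h2 ?_) this
      exact (integrableOn_singleton_iff (by simp)).2 (Or.inr (by simp))
    refine Integrable.mono' hbase ((hcont.mono ?_).aestronglyMeasurable measurableSet_Ico) ?_
    · intro s hs
      exact ⟨lt_of_lt_of_le (by norm_num) hs.1, hs.2⟩
    · filter_upwards [ae_restrict_mem measurableSet_Ico] with s hs
      have hs0 : (0:ℝ) < s := lt_of_lt_of_le (by norm_num) hs.1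
      have hs1 : s < 1 := hs.2
      rw [Real.norm_eq_abs, abs_mul, abs_of_nonneg (Real.rpow_nonneg hs0.le _),
        abs_of_nonneg (Real.rpow_nonneg (by linarith) _)]
      have hkey : s ^ (α - 1) ≤ 2 ^ (1 - α) := by
        have h12 : (2:ℝ)⁻¹ ≤ s := hs.1
        have := Real.rpow_le_rpow (by norm_num) h12 (by linarith : (0:ℝ) ≤ 1 - α)
        calc s ^ (α - 1) = (s ^ (1 - α))⁻¹ := by
              rw [← Real.rpow_neg hs0.le]; ring_nf
            _ ≤ (((2:ℝ)⁻¹) ^ (1 - α))⁻¹ := inv_anti₀ (Real.rpow_pos_of_pos (by norm_num) _) this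
            _ = 2 ^ (1 - α) := by rw [← Real.inv_rpow (by norm_num), inv_inv]
      exact mul_le_mul_of_nonneg_right hkey (Real.rpow_nonneg (by linarith) _)

lemma inner_identity {α : ℝ} (hα : α ∈ Set.Ioo (1/2 : ℝ) 1) {c : ℝ} (hc : 0 < c) :
    ∫ s in Set.Ioo (0:ℝ) 1, s ^ (α - 2) * (1 - s) ^ (-α) * Real.exp (-c / s)
      = Real.Gamma (1 - α) * c ^ (α - 1) * Real.exp (-c) := by
  obtain ⟨hα1, hα2⟩ := hα
  set g : ℝ → ℝ := fun s => s ^ (α - 2) * (1 - s) ^ (-α) * Real.exp (-c / s) with hg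
  have himg : (fun r : ℝ => (1 + r)⁻¹) '' Set.Ioi 0 = Set.Ioo 0 1 := by
    ext y
    constructor
    · rintro ⟨r, hr, rfl⟩
      have hr0 : (0:ℝ) < r := hr
      have h1r : (0:ℝ) < 1 + r := by linarith
      constructor
      · positivity
      · rw [inv_lt_one_iff₀]; right; linarith
    · rintro ⟨hy0, hy1⟩
      refine ⟨(1 - y)/y, ?_, ?_⟩
      · exact div_pos (by linarith) hy0
      · show (1 + (1 - y)/y)⁻¹ = y
        rw [show (1:ℝ) + (1-y)/y = 1/y by field_simp; ring]
        simp
  have hderiv : ∀ r ∈ Set.Ioi (0:ℝ),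
      HasDerivWithinAt (fun r : ℝ => (1 + r)⁻¹) (-1/(1+r)^2) (Set.Ioi 0) r := by
    intro r hr
    have h1r : (1:ℝ) + r ≠ 0 := by have : (0:ℝ) < r := hr; positivity
    have := ((hasDerivAt_id r).const_add 1).inv h1r
    exact this.hasDerivWithinAt
  have hinj : Set.InjOn (fun r : ℝ => (1 + r)⁻¹) (Set.Ioi 0) := by
    intro a ha b hb hab
    have ha' : (1:ℝ) + a ≠ 0 := by have : (0:ℝ) < a := ha; positivity
    have hb' : (1:ℝ) + b ≠ 0 := by have : (0:ℝ) < b := hb; positivity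
    have := inv_injective hab
    linarith [this]
  have hsub := integral_image_eq_integral_abs_deriv_smul measurableSet_Ioi hderiv hinj g
  rw [himg] at hsub
  rw [hsub]
  have key : ∀ r ∈ Set.Ioi (0:ℝ), |(-1/(1+r)^2)| • g ((1+r)⁻¹)
      = Real.exp (-c) * (r ^ ((1-α)-1) * Real.exp (-(c*r))) := by
    intro r hr
    have hr0 : (0:ℝ) < r := hr
    have hp : (0:ℝ) < 1 + r := by linarith
    have h1 : ((1+r)⁻¹ : ℝ) ^ (α - 2) = (1+r) ^ (2 - α) := by
      rw [Real.inv_rpow hp.le, ← Real.rpow_neg hp.le, neg_sub]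
    have h2 : (1:ℝ) - (1+r)⁻¹ = r / (1+r) := by field_simp; ring
    have h3 : (r / (1+r)) ^ (-α) = r ^ (-α) * (1+r) ^ α := by
      rw [Real.div_rpow hr0.le hp.le, Real.rpow_neg hp.le]
      field_simp
    have h4 : -c / ((1+r)⁻¹ : ℝ) = -(c * (1+r)) := by field_simp
    rw [smul_eq_mul, hg]
    simp only []
    rw [h1, h2, h3, h4]
    rw [abs_of_nonpos (div_nonpos_of_nonpos_of_nonneg (by norm_num) (sq_nonneg (1+r)))]
    have hcomb : (1+r) ^ (2 - α) * (r ^ (-α) * (1+r) ^ α) = r ^ (-α) * (1+r)^(2:ℕ) := by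
      rw [show (1+r) ^ (2 - α) * (r ^ (-α) * (1+r) ^ α)
          = r ^ (-α) * ((1+r) ^ (2 - α) * (1+r) ^ α) by ring,
        ← Real.rpow_add hp, sub_add_cancel, ← Real.rpow_natCast (1+r) 2]
      norm_num
    have hexp : Real.exp (-(c * (1+r))) = Real.exp (-c) * Real.exp (-(c*r)) := by
      rw [← Real.exp_add]; ring_nf
    rw [hcomb, hexp]
    have hne : ((1+r):ℝ)^(2:ℕ) ≠ 0 := by positivity
    rw [show (1:ℝ)-α-1 = -α by ring]
    field_simp
  rw [setIntegral_congr_fun measurableSet_Ioi key]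
  rw [integral_const_mul, Real.integral_rpow_mul_exp_neg_mul_Ioi (by linarith) hc]
  have : ((1:ℝ)/c) ^ (1-α) = c ^ (α - 1) := by
    rw [one_div, ← Real.rpow_neg_one c, ← Real.rpow_mul hc.le]
    ring_nf
  rw [this]
  ring

lemma integral_exp_neg_mul_Ioi' {b : ℝ} (hb : 0 < b) :
    ∫ u in Set.Ioi (0:ℝ), Real.exp (-b * u) = b⁻¹ := by
  have h := integral_comp_mul_left_Ioi (fun u => Real.exp (-u)) 0 hb
  simp only [mul_zero, integral_exp_neg_Ioi, neg_zero, Real.exp_zero, smul_eq_mul, mul_one] at h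
  rw [← h]
  exact setIntegral_congr_fun measurableSet_Ioi fun u _ => by rw [neg_mul]


/-- For every `λ > 0` and `x > 0`, both Laplace-type integrals are
finite and `∫₀^∞ e^{−λt} q*(t,x) dt = (λ^{α−1}/Γ(α)) ∫₀^∞ e^{−λs} s^{α−1} q_BS(s,x) ds`. -/
theorem qStar_Laplace_transform
    (K α : ℝ) (hK : 0 < K) (hα : α ∈ Set.Ioo (1 / 2 : ℝ) 1) :
    ∀ lam : ℝ, 0 < lam → ∀ x : ℝ, 0 < x →
      IntegrableOn (fun t => Real.exp (-lam * t) * qStar K α t x) (Set.Ioi (0 : ℝ))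
      ∧ IntegrableOn (fun s => Real.exp (-lam * s) * s ^ (α - 1) * qBS K s x)
          (Set.Ioi (0 : ℝ))
      ∧ ∫ t in Set.Ioi (0 : ℝ), Real.exp (-lam * t) * qStar K α t x
          = lam ^ (α - 1) / Real.Gamma α *
              ∫ s in Set.Ioi (0 : ℝ), Real.exp (-lam * s) * s ^ (α - 1) * qBS K s x := by
  intro lam hlam x hx
  obtain ⟨hα1, hα2⟩ := hα
  have hΓα : 0 < Real.Gamma α := Real.Gamma_pos_of_pos (by linarith)
  have hΓα' : 0 < Real.Gamma (1 - α) := Real.Gamma_pos_of_pos (by linarith)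
  set c₀ : ℝ := (Real.Gamma α * Real.Gamma (1 - α))⁻¹ with hc₀
  set w : ℝ → ℝ := fun s => s ^ (α - 1) * (1 - s) ^ (-α) with hw
  set q : ℝ → ℝ := fun u => qBS K u x with hq
  set F₁ : ℝ → ℝ → ℝ := fun t s => Real.exp (-lam * t) * (w s * q (t * s)) with hF₁
  set F₂ : ℝ → ℝ → ℝ :=
    fun s u => s ^ (α - 2) * (1 - s) ^ (-α) * Real.exp (-(lam * u) / s) * q u with hF₂
  have hwInt : IntegrableOn w (Set.Ioo 0 1) := integrableOn_weight ⟨hα1, hα2⟩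
  have hwCont : ContinuousOn w (Set.Ioo 0 1) := by
    apply ContinuousOn.mul
    · exact ContinuousOn.rpow_const continuousOn_id fun s hs => Or.inl (ne_of_gt hs.1)
    · exact ContinuousOn.rpow_const (continuousOn_const.sub continuousOn_id)
        fun s hs => Or.inl (by simpa using sub_ne_zero.2 (ne_of_lt hs.2).symm)
  have hqCont : ContinuousOn q (Set.Ioi 0) := continuousOn_qBS
  have hqB : ∀ u, |q u| ≤ x + K := fun u => abs_qBS_le hK hx u
  -- measurability of F₁ on the product
  have hmeasF₁ : AEStronglyMeasurable (Function.uncurry F₁)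
      ((volume.restrict (Set.Ioi 0)).prod (volume.restrict (Set.Ioo 0 1))) := by
    rw [Measure.prod_restrict]
    refine ContinuousOn.aestronglyMeasurable ?_ (measurableSet_Ioi.prod measurableSet_Ioo)
    apply ContinuousOn.mul
    · exact (Real.continuous_exp.comp (continuous_const.mul continuous_fst)).continuousOn
    · apply ContinuousOn.mul
      · exact hwCont.comp continuous_snd.continuousOn fun p hp => hp.2
      · exact hqCont.comp (continuous_fst.mul continuous_snd).continuousOn
          fun p hp => mul_pos hp.1 hp.2.1
  have hexpInt : IntegrableOn (fun t => Real.exp (-lam * t)) (Set.Ioi (0:ℝ)) :=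
    exp_neg_integrableOn_Ioi 0 hlam
  -- integrability of F₁ on the product
  have hF₁int : Integrable (Function.uncurry F₁)
      ((volume.restrict (Set.Ioi 0)).prod (volume.restrict (Set.Ioo 0 1))) := by
    refine Integrable.mono' ((hexpInt.mul_prod hwInt.abs).const_mul (x + K)) hmeasF₁ ?_
    refine Filter.Eventually.of_forall fun p => ?_
    have h1 : |q (p.1 * p.2)| ≤ x + K := hqB _
    have h2 : (0:ℝ) ≤ Real.exp (-lam * p.1) * |w p.2| := by positivity
    calc ‖Function.uncurry F₁ p‖
        = Real.exp (-lam * p.1) * |w p.2| * |q (p.1 * p.2)| := by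
          simp only [Function.uncurry, hF₁, Real.norm_eq_abs, abs_mul,
            abs_of_pos (Real.exp_pos _), mul_assoc]
      _ ≤ Real.exp (-lam * p.1) * |w p.2| * (x + K) := mul_le_mul_of_nonneg_left h1 h2
      _ = (x + K) * (Real.exp (-lam * p.1) * |w p.2|) := by ring
  -- measurability of F₂ on the product
  have hmeasF₂ : AEStronglyMeasurable (Function.uncurry F₂)
      ((volume.restrict (Set.Ioo 0 1)).prod (volume.restrict (Set.Ioi 0))) := by
    rw [Measure.prod_restrict]
    refine ContinuousOn.aestronglyMeasurable ?_ (measurableSet_Ioo.prod measurableSet_Ioi)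
    apply ContinuousOn.mul
    apply ContinuousOn.mul
    apply ContinuousOn.mul
    · exact ContinuousOn.rpow_const continuous_fst.continuousOn
        fun p hp => Or.inl (ne_of_gt hp.1.1)
    · exact ContinuousOn.rpow_const (continuousOn_const.sub continuous_fst.continuousOn)
        fun p hp => Or.inl (by simpa using sub_ne_zero.2 (ne_of_lt hp.1.2).symm)
    · exact Real.continuous_exp.comp_continuousOn
        (ContinuousOn.div ((continuous_const.mul continuous_snd).neg).continuousOn
          continuous_fst.continuousOn fun p hp => ne_of_gt hp.1.1)
    · exact hqCont.comp continuous_snd.continuousOn fun p hp => hp.2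
  -- integrability of F₂ on the product
  have hF₂int : Integrable (Function.uncurry F₂)
      ((volume.restrict (Set.Ioo 0 1)).prod (volume.restrict (Set.Ioi 0))) := by
    rw [integrable_prod_iff hmeasF₂]
    constructor
    · filter_upwards [ae_restrict_mem measurableSet_Ioo] with s hs
      simp only [Function.uncurry_apply_pair]
      have hs0 : 0 < s := hs.1
      have hb : 0 < lam / s := div_pos hlam hs0
      set A : ℝ := s ^ (α - 2) * (1 - s) ^ (-α) with hA
      have hA0 : 0 ≤ A := by
        apply mul_nonneg <;> exact Real.rpow_nonneg (by linarith [hs.1, hs.2]) _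
      refine Integrable.mono' ((exp_neg_integrableOn_Ioi 0 hb).const_mul (A * (x + K)))
        ?_ ?_
      · refine ContinuousOn.aestronglyMeasurable ?_ measurableSet_Ioi
        refine ContinuousOn.mul (ContinuousOn.mul continuousOn_const ?_) hqCont
        exact (Real.continuous_exp.comp
          (((continuous_const.mul continuous_id).neg).div_const s)).continuousOn
      · filter_upwards [ae_restrict_mem measurableSet_Ioi] with u _
        have he : Real.exp (-(lam * u) / s) = Real.exp (-(lam / s) * u) := by
          congr 1; ring
        calc ‖F₂ s u‖ = A * Real.exp (-(lam * u) / s) * |q u| := by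
              simp only [hF₂, Real.norm_eq_abs, abs_mul, abs_of_nonneg hA0,
                abs_of_pos (Real.exp_pos _), hA, abs_of_nonneg (Real.rpow_nonneg hs0.le _),
                  abs_of_nonneg (Real.rpow_nonneg (by linarith [hs.2] : (0:ℝ) ≤ 1 - s) _)]
          _ ≤ A * Real.exp (-(lam * u) / s) * (x + K) := by
              refine mul_le_mul_of_nonneg_left (hqB u) ?_
              positivity
          _ = A * (x + K) * Real.exp (-(lam / s) * u) := by rw [he]; ring
    · refine Integrable.mono' (hwInt.const_mul ((x + K) / lam))
        (hmeasF₂.norm.integral_prod_right') ?_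
      filter_upwards [ae_restrict_mem measurableSet_Ioo] with s hs
      have hs0 : 0 < s := hs.1
      have hb : 0 < lam / s := div_pos hlam hs0
      set A : ℝ := s ^ (α - 2) * (1 - s) ^ (-α) with hA
      have hA0 : 0 ≤ A := by
        apply mul_nonneg <;> exact Real.rpow_nonneg (by linarith [hs.1, hs.2]) _
      have hbound : ∫ u in Set.Ioi (0:ℝ), ‖F₂ s u‖
          ≤ ∫ u in Set.Ioi (0:ℝ), A * (x + K) * Real.exp (-(lam / s) * u) := by
        refine integral_mono_of_nonneg (Filter.Eventually.of_forall fun u => norm_nonneg _)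
          ((exp_neg_integrableOn_Ioi 0 hb).const_mul (A * (x + K))) ?_
        filter_upwards [ae_restrict_mem measurableSet_Ioi] with u _
        have he : Real.exp (-(lam * u) / s) = Real.exp (-(lam / s) * u) := by
          congr 1; ring
        calc ‖F₂ s u‖ = A * Real.exp (-(lam * u) / s) * |q u| := by
              simp only [hF₂, Real.norm_eq_abs, abs_mul, abs_of_nonneg hA0,
                abs_of_pos (Real.exp_pos _), hA, abs_of_nonneg (Real.rpow_nonneg hs0.le _),
                  abs_of_nonneg (Real.rpow_nonneg (by linarith [hs.2] : (0:ℝ) ≤ 1 - s) _)]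
          _ ≤ A * Real.exp (-(lam * u) / s) * (x + K) := by
              refine mul_le_mul_of_nonneg_left (hqB u) ?_
              positivity
          _ = A * (x + K) * Real.exp (-(lam / s) * u) := by rw [he]; ring
      have hval : ∫ u in Set.Ioi (0:ℝ), A * (x + K) * Real.exp (-(lam / s) * u)
          = A * (x + K) * (s / lam) := by
        rw [integral_const_mul, integral_exp_neg_mul_Ioi' hb]
        rw [inv_div]
      have hpow : A * s = w s := by
        rw [hA, hw]
        rw [show s ^ (α - 2) * (1 - s) ^ (-α) * s
            = s ^ (α - 2) * s * (1 - s) ^ (-α) by ring]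
        rw [← Real.rpow_add_one (ne_of_gt hs0), show α - 2 + 1 = α - 1 by ring]
      rw [Real.norm_eq_abs, abs_of_nonneg (integral_nonneg fun u => norm_nonneg _)]
      calc ∫ u in Set.Ioi (0:ℝ), ‖F₂ s u‖ ≤ A * (x + K) * (s / lam) := by
            rw [← hval]; exact hbound
        _ = (x + K) / lam * (A * s) := by ring
        _ = (x + K) / lam * w s := by rw [hpow]
  -- Step 1 : rewrite the LHS as an iterated integral
  have step1 : ∫ t in Set.Ioi (0:ℝ), Real.exp (-lam * t) * qStar K α t x
      = c₀ * ∫ t in Set.Ioi (0:ℝ), ∫ s in Set.Ioo (0:ℝ) 1, F₁ t s := by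
    rw [← integral_const_mul]
    refine setIntegral_congr_fun measurableSet_Ioi fun t ht => ?_
    have ht0 : t ≠ 0 := ne_of_gt ht
    rw [qStar, if_neg ht0]
    rw [← integral_const_mul, ← integral_const_mul, ← integral_const_mul]
    exact integral_congr_ae (Filter.Eventually.of_forall fun s => by
      simp only [hF₁, hw, hq]; ring)
  -- Step 2 : Fubini for F₁
  have step2 : ∫ t in Set.Ioi (0:ℝ), ∫ s in Set.Ioo (0:ℝ) 1, F₁ t s
      = ∫ s in Set.Ioo (0:ℝ) 1, ∫ t in Set.Ioi (0:ℝ), F₁ t s :=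
    integral_integral_swap hF₁int
  -- Step 3 : substitution u = t * s in the inner integral
  have step3 : ∀ s ∈ Set.Ioo (0:ℝ) 1,
      ∫ t in Set.Ioi (0:ℝ), F₁ t s = ∫ u in Set.Ioi (0:ℝ), F₂ s u := by
    intro s hs
    have hs0 : 0 < s := hs.1
    set h : ℝ → ℝ := fun u => Real.exp (-(lam * u) / s) * q u with hh
    have e1 : ∀ t ∈ Set.Ioi (0:ℝ), F₁ t s = h (t * s) * w s := by
      intro t _
      simp only [hF₁, hh]
      rw [show -(lam * (t * s)) / s = -lam * t * (s / s) by ring, div_self (ne_of_gt hs0)]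
      ring_nf
    rw [setIntegral_congr_fun measurableSet_Ioi e1, integral_mul_const,
      integral_comp_mul_right_Ioi h 0 hs0, zero_mul, smul_eq_mul]
    have hpow : s⁻¹ * w s = s ^ (α - 2) * (1 - s) ^ (-α) := by
      rw [hw, show s⁻¹ * (s ^ (α - 1) * (1 - s) ^ (-α))
          = s⁻¹ * s ^ (α - 1) * (1 - s) ^ (-α) by ring,
        ← Real.rpow_neg_one s, ← Real.rpow_add hs0, show (-1:ℝ) + (α - 1) = α - 2 by ring]
    rw [← integral_const_mul, ← integral_mul_const]
    refine integral_congr_ae (Filter.Eventually.of_forall fun u => ?_)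
    simp only [hF₂, hh]
    rw [← hpow]
    ring
  -- Step 4 : Fubini for F₂
  have step4 : ∫ s in Set.Ioo (0:ℝ) 1, ∫ u in Set.Ioi (0:ℝ), F₂ s u
      = ∫ u in Set.Ioi (0:ℝ), ∫ s in Set.Ioo (0:ℝ) 1, F₂ s u :=
    integral_integral_swap hF₂int
  -- Step 5 : the inner integral over s
  have step5 : ∀ u ∈ Set.Ioi (0:ℝ), ∫ s in Set.Ioo (0:ℝ) 1, F₂ s u
      = (Real.Gamma (1 - α) * lam ^ (α - 1)) *
        (Real.exp (-lam * u) * u ^ (α - 1) * q u) := by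
    intro u hu
    have hu0 : 0 < u := hu
    have hc : 0 < lam * u := mul_pos hlam hu0
    have : ∫ s in Set.Ioo (0:ℝ) 1, F₂ s u
        = (∫ s in Set.Ioo (0:ℝ) 1,
            s ^ (α - 2) * (1 - s) ^ (-α) * Real.exp (-(lam * u) / s)) * q u := by
      rw [← integral_mul_const]
    rw [this, inner_identity ⟨hα1, hα2⟩ hc, Real.mul_rpow hlam.le hu0.le]
    rw [show -(lam * u) = -lam * u by ring]
    ring
  -- the RHS integrand in integrable form
  have hR : IntegrableOn
      (fun u => Real.exp (-lam * u) * u ^ (α - 1) * qBS K u x) (Set.Ioi (0:ℝ)) := by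
    have h1 : Integrable (fun u => ∫ s in Set.Ioo (0:ℝ) 1, F₂ s u)
        (volume.restrict (Set.Ioi 0)) := hF₂int.integral_prod_right
    have hC : (Real.Gamma (1 - α) * lam ^ (α - 1)) ≠ 0 := by positivity
    refine ((h1.const_mul (Real.Gamma (1 - α) * lam ^ (α - 1))⁻¹).congr ?_)
    filter_upwards [ae_restrict_mem measurableSet_Ioi] with u hu
    rw [step5 u hu]
    field_simp
    rfl
  -- the LHS integrand in integrable form
  have hL : IntegrableOn (fun t => Real.exp (-lam * t) * qStar K α t x) (Set.Ioi (0:ℝ)) := by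
    have h1 : Integrable (fun t => ∫ s in Set.Ioo (0:ℝ) 1, F₁ t s)
        (volume.restrict (Set.Ioi 0)) := hF₁int.integral_prod_left
    refine (h1.const_mul c₀).congr ?_
    filter_upwards [ae_restrict_mem measurableSet_Ioi] with t ht
    have ht0 : t ≠ 0 := ne_of_gt ht
    rw [qStar, if_neg ht0]
    rw [← integral_const_mul, ← integral_const_mul, ← integral_const_mul]
    exact (integral_congr_ae (Filter.Eventually.of_forall fun s => by
      simp only [hF₁, hw, hq]; ring)).symm
  refine ⟨hL, hR, ?_⟩
  rw [step1, step2]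
  rw [setIntegral_congr_fun measurableSet_Ioo step3, step4]
  rw [setIntegral_congr_fun measurableSet_Ioi step5]
  rw [integral_const_mul]
  rw [hc₀, hq]
  rw [show ((Real.Gamma α * Real.Gamma (1 - α))⁻¹ *
      (Real.Gamma (1 - α) * lam ^ (α - 1) *
        ∫ u in Set.Ioi (0:ℝ), Real.exp (-lam * u) * u ^ (α - 1) * qBS K u x))
    = (lam ^ (α - 1) * (Real.Gamma (1 - α) * (Real.Gamma α * Real.Gamma (1 - α))⁻¹)) *
        ∫ u in Set.Ioi (0:ℝ), Real.exp (-lam * u) * u ^ (α - 1) * qBS K u x by ring]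
  congr 1
  field_simp
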